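/- Let K be a field with an ω-complete field topology τ. Then τ is gt-henselian if and only if τ admits a neighbourhood basis at 0 consisting of henselian ideals, i.e., of sets P ⊆ K such that P is the maximal ideal of some henselian local subring of K whose fraction field is K. -/

import Mathlib

open Topology Polynomial

/-- A field topology is gt-henselian if for every `n ≥ 1` and every neighbourhood `P` of
`−1` there is a neighbourhood `O` of `0` such that for all `a₀, …, a_{n−1} ∈ O` the
polynomial `X^{n+1} + X^n + a_{n−1}X^{n−1} + … + a₁X + a₀` has a root in `P`. -/
def GtHenselian (K : Type*) [Field K] [TopologicalSpace K] : Prop :=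
  ∀ n : ℕ, 1 ≤ n → ∀ P ∈ nhds (-1 : K), ∃ O ∈ nhds (0 : K),
    ∀ a : ℕ → K, (∀ i < n, a i ∈ O) →
      ∃ x ∈ P, x ^ (n + 1) + x ^ n + ∑ i ∈ Finset.range n, a i * x ^ i = 0

/-- A subset `P` of a field `K` is a henselian ideal if it is the maximal ideal of a
henselian local subring `R` of `K` with fraction field `K`.  This is spelled out as: `R` has
fraction field `K`; `P` is the set of nonunits of `R` (which, being closed under addition,
makes `R` local with maximal ideal `P`); and `R` is henselian: any polynomial over `R`
with a point `a ∈ R` where it vanishes mod `P` and its derivative is invertible has a root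
in `R` congruent to `a` mod `P`. -/
def IsHenselianIdeal {K : Type*} [Field K] (P : Set K) : Prop :=
  ∃ R : Subring K,
    (∀ x : K, ∃ a ∈ R, ∃ b ∈ R, b ≠ 0 ∧ x = a / b) ∧
    P = {x : K | x ∈ R ∧ ∀ y ∈ R, x * y ≠ 1} ∧
    (∀ x ∈ P, ∀ y ∈ P, x + y ∈ P) ∧
    (∀ f : K[X], (∀ i : ℕ, f.coeff i ∈ R) → ∀ a ∈ R,
      f.eval a ∈ P → f.derivative.eval a ∉ P →
        ∃ b ∈ R, f.eval b = 0 ∧ b - a ∈ P)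

namespace Statement15Aux

open Finset

variable {K : Type*} [Field K]

structure NiceSet (m : Set K) : Prop where
  zero : (0:K) ∈ m
  add : ∀ a ∈ m, ∀ b ∈ m, a + b ∈ m
  mul : ∀ a ∈ m, ∀ b ∈ m, a * b ∈ m
  neg : ∀ a ∈ m, -a ∈ m
  inv1 : ∀ a ∈ m, 1 + a ≠ 0 ∧ a / (1 + a) ∈ m
  intz : ∀ z : ℤ, (z:K) ∈ m → (z:K) = 0
  divz : ∀ a ∈ m, ∀ z : ℤ, (z:K) ≠ 0 → a / (z:K) ∈ m

namespace NiceSet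

variable {m : Set K} (h : NiceSet m)
include h

theorem one_not_mem : (1:K) ∉ m := fun hm =>
  one_ne_zero (α := K) (by simpa using h.intz 1 (by simpa using hm))

theorem sub_mem {a b : K} (ha : a ∈ m) (hb : b ∈ m) : a - b ∈ m := by
  simpa [sub_eq_add_neg] using h.add a ha (-b) (h.neg b hb)

theorem sum_mem {ι : Type*} (s : Finset ι) (f : ι → K) (hf : ∀ i ∈ s, f i ∈ m) :
    (∑ i ∈ s, f i) ∈ m :=
  Finset.sum_induction f (· ∈ m) (fun a b ha hb => h.add a ha b hb) h.zero hf

theorem natmul (k : ℕ) {a : K} (ha : a ∈ m) : (k:K) * a ∈ m := by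
  induction k with
  | zero => simpa using h.zero
  | succ n ih =>
    have := h.add _ ih a ha
    have e : ((n:K)+1) * a = (n:K) * a + a := by ring
    rw [Nat.cast_succ, e]
    exact this

theorem intmul (z : ℤ) {a : K} (ha : a ∈ m) : (z:K) * a ∈ m := by
  obtain ⟨n, rfl | rfl⟩ := z.eq_nat_or_neg
  · push_cast; exact h.natmul n ha
  · push_cast
    have := h.neg _ (h.natmul n ha)
    simpa using this

theorem signmul (j : ℕ) {a : K} (ha : a ∈ m) : (-1:K)^j * a ∈ m := by
  rcases Nat.even_or_odd j with hj | hj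
  · rw [hj.neg_one_pow]; simpa using ha
  · rw [hj.neg_one_pow]; simpa using h.neg a ha

theorem pow_cong {w : K} (hw : w + 1 ∈ m) (j : ℕ) : w^j - (-1:K)^j ∈ m := by
  induction j with
  | zero => simpa using h.zero
  | succ n ih =>
    have key : w^(n+1) - (-1:K)^(n+1)
        = (w+1) * (w^n - (-1)^n) + (-(w^n - (-1)^n)) + ((-1)^n * (w+1)) := by ring
    rw [key]
    exact h.add _ (h.add _ (h.mul _ hw _ ih) _ (h.neg _ ih)) _ (h.signmul n hw)

theorem prod_cong {w y : K} (hw : w + 1 ∈ m) (hy : y + 1 ∈ m) (j l : ℕ) :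
    w^j * y^l - (-1:K)^(j + l) ∈ m := by
  have h1 := h.pow_cong hw j
  have h2 := h.pow_cong hy l
  have key : w^j * y^l - (-1:K)^(j+l)
      = (w^j - (-1)^j) * (y^l - (-1)^l) + (-1)^j * (y^l - (-1)^l)
        + (-1)^l * (w^j - (-1)^j) := by
    rw [pow_add]; ring
  rw [key]
  exact h.add _ (h.add _ (h.mul _ h1 _ h2) _ (h.signmul j h2)) _ (h.signmul l h1)

end NiceSet

theorem root_uniq {m : Set K} (h : NiceSet m) (n : ℕ) (hn : 1 ≤ n) (a : ℕ → K)
    (ha : ∀ i < n, a i ∈ m) {x y : K} (hx : x + 1 ∈ m) (hy : y + 1 ∈ m)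
    (hfx : x ^ (n + 1) + x ^ n + ∑ i ∈ Finset.range n, a i * x ^ i = 0)
    (hfy : y ^ (n + 1) + y ^ n + ∑ i ∈ Finset.range n, a i * y ^ i = 0) :
    x = y := by
  set D : K := (∑ j ∈ range (n+1), x^j * y^(n+1-1-j))
      + (∑ j ∈ range n, x^j * y^(n-1-j))
      + ∑ i ∈ range n, a i * (∑ j ∈ range i, x^j * y^(i-1-j)) with hD
  have key1 : D * (x - y) = 0 := by
    have e3 : (∑ i ∈ range n, a i * (∑ j ∈ range i, x^j * y^(i-1-j))) * (x - y)
        = ∑ i ∈ range n, a i * x^i - ∑ i ∈ range n, a i * y^i := by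
      rw [Finset.sum_mul, ← Finset.sum_sub_distrib]
      refine Finset.sum_congr rfl fun i _ => ?_
      rw [mul_assoc, geom_sum₂_mul x y i, mul_sub]
    have expand : D * (x - y)
        = (∑ j ∈ range (n+1), x^j * y^(n+1-1-j)) * (x - y)
          + (∑ j ∈ range n, x^j * y^(n-1-j)) * (x - y)
          + (∑ i ∈ range n, a i * (∑ j ∈ range i, x^j * y^(i-1-j))) * (x - y) := by
      rw [hD]; ring
    rw [expand, geom_sum₂_mul x y (n+1), geom_sum₂_mul x y n, e3]
    have : (x^(n+1) + x^n + ∑ i ∈ range n, a i * x^i)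
        - (y^(n+1) + y^n + ∑ i ∈ range n, a i * y^i) = 0 := by rw [hfx, hfy]; ring
    linear_combination this
  have geommem : ∀ N : ℕ, (∑ j ∈ range N, x^j * y^(N-1-j)) - (N:K) * (-1:K)^(N-1) ∈ m := by
    intro N
    have e : (∑ j ∈ range N, x^j * y^(N-1-j)) - (N:K) * (-1:K)^(N-1)
        = ∑ j ∈ range N, (x^j * y^(N-1-j) - (-1:K)^(N-1)) := by
      rw [Finset.sum_sub_distrib, Finset.sum_const, card_range, nsmul_eq_mul]
    rw [e]
    refine h.sum_mem _ _ fun j hj => ?_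
    have hj' := mem_range.mp hj
    have e2 : j + (N-1-j) = N-1 := by omega
    simpa only [e2] using h.prod_cong hx hy j (N-1-j)
  have key2 : D - (-1:K)^n ∈ m := by
    obtain ⟨n', rfl⟩ : ∃ n', n = n' + 1 := ⟨n - 1, (Nat.succ_pred_eq_of_pos hn).symm⟩
    have hS1 := geommem (n'+2)
    have hS2 := geommem (n'+1)
    have hS3 : (∑ i ∈ range (n'+1), a i * (∑ j ∈ range i, x^j * y^(i-1-j))) ∈ m := by
      refine h.sum_mem _ _ fun i hi => ?_
      have hai : a i ∈ m := ha i (mem_range.mp hi)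
      have e : a i * (∑ j ∈ range i, x^j * y^(i-1-j))
          = a i * ((∑ j ∈ range i, x^j * y^(i-1-j)) - ((i:ℕ):K) * (-1:K)^(i-1))
            + (i:K) * ((-1:K)^(i-1) * a i) := by ring
      rw [e]
      exact h.add _ (h.mul _ hai _ (geommem i)) _ (h.natmul i (h.signmul (i-1) hai))
    have cancel : ((n'+2 : ℕ):K) * (-1:K)^(n'+2-1) + ((n'+1 : ℕ):K) * (-1:K)^(n'+1-1)
        = (-1:K)^(n'+1) := by
      push_cast
      norm_num [pow_succ]
      ring
    have final : D - (-1:K)^(n'+1)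
        = ((∑ j ∈ range (n'+2), x^j * y^(n'+2-1-j)) - ((n'+2 : ℕ):K) * (-1:K)^(n'+2-1))
          + ((∑ j ∈ range (n'+1), x^j * y^(n'+1-1-j)) - ((n'+1 : ℕ):K) * (-1:K)^(n'+1-1))
          + (∑ i ∈ range (n'+1), a i * (∑ j ∈ range i, x^j * y^(i-1-j))) := by
      rw [hD]
      have e1 : n'+1+1 = n'+2 := rfl
      have e2 : (∑ j ∈ range (n'+1+1), x^j * y^(n'+1+1-1-j))
          = ∑ j ∈ range (n'+2), x^j * y^(n'+2-1-j) := rfl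
      rw [e2]
      linear_combination cancel
    rw [final]
    exact h.add _ (h.add _ hS1 _ hS2) _ hS3
  have hDne : D ≠ 0 := by
    intro h0
    have : -(-1:K)^n ∈ m := by simpa [h0] using key2
    have h1m : (-1:K)^n ∈ m := by simpa using h.neg _ this
    rcases Nat.even_or_odd n with hn2 | hn2
    · rw [hn2.neg_one_pow] at h1m; exact h.one_not_mem h1m
    · rw [hn2.neg_one_pow] at h1m
      exact h.one_not_mem (by simpa using h.neg _ h1m)
  rcases mul_eq_zero.mp key1 with h1 | h1
  · exact absurd h1 hDne
  · exact sub_eq_zero.mp h1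


def SS (m : Set K) : Set K := {x : K | ∃ z : ℤ, ∃ c ∈ m, x = (z:K) + c}

def RR (m : Set K) : Set K := {x : K | ∃ a ∈ SS m, ∃ b ∈ SS m, b ∉ m ∧ x = a / b}

namespace NiceSet

variable {m : Set K} (h : NiceSet m)
include h

theorem m_subset_SS : m ⊆ SS m := fun a ha => ⟨0, a, ha, by simp⟩

theorem int_mem_SS (z : ℤ) : (z:K) ∈ SS m := ⟨z, 0, h.zero, by simp⟩

theorem one_mem_SS : (1:K) ∈ SS m := by simpa using h.int_mem_SS 1

theorem one_not_mem' : (1:K) ∉ m := h.one_not_mem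

theorem SS_add {a b : K} (ha : a ∈ SS m) (hb : b ∈ SS m) : a + b ∈ SS m := by
  obtain ⟨z, c, hc, rfl⟩ := ha
  obtain ⟨w, d, hd, rfl⟩ := hb
  exact ⟨z + w, c + d, h.add _ hc _ hd, by push_cast; ring⟩

theorem SS_neg {a : K} (ha : a ∈ SS m) : -a ∈ SS m := by
  obtain ⟨z, c, hc, rfl⟩ := ha
  exact ⟨-z, -c, h.neg _ hc, by push_cast; ring⟩

theorem SS_mul {a b : K} (ha : a ∈ SS m) (hb : b ∈ SS m) : a * b ∈ SS m := by
  obtain ⟨z, c, hc, rfl⟩ := ha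
  obtain ⟨w, d, hd, rfl⟩ := hb
  refine ⟨z * w, (w:K) * c + (z:K) * d + c * d,
    h.add _ (h.add _ (h.intmul w hc) _ (h.intmul z hd)) _ (h.mul _ hc _ hd), by push_cast; ring⟩

theorem not_mem_ne_zero {b : K} (hb : b ∉ m) : b ≠ 0 := fun h0 => hb (h0 ▸ h.zero)

theorem absorb {c s : K} (hc : c ∈ m) (hs : s ∈ SS m) : c * s ∈ m := by
  obtain ⟨z, d, hd, rfl⟩ := hs
  have : c * ((z:K) + d) = (z:K) * c + c * d := by ring
  rw [this]
  exact h.add _ (h.intmul z hc) _ (h.mul _ hc _ hd)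

theorem div_mem_of_mem {a b : K} (ha : a ∈ m) (hb : b ∈ SS m) (hbm : b ∉ m) :
    a / b ∈ m := by
  obtain ⟨z, c, hc, rfl⟩ := hb
  have hz : (z:K) ≠ 0 := by
    intro h0
    exact hbm (by simpa [h0] using hc)
  have hcz : c / (z:K) ∈ m := h.divz c hc z hz
  have h1 := (h.inv1 _ hcz).1
  have hb0 : (z:K) + c ≠ 0 := by
    have e : (z:K) + c = (z:K) * (1 + c/(z:K)) := by field_simp
    rw [e]
    exact mul_ne_zero hz h1
  have e : a / ((z:K) + c) = a/(z:K) - (a/(z:K)) * ((c/(z:K))/(1 + c/(z:K))) := by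
    field_simp
    ring
  rw [e]
  exact h.sub_mem (h.divz a ha z hz) (h.mul _ (h.divz a ha z hz) _ (h.inv1 _ hcz).2)

theorem mem_of_div_mem {a b : K} (haS : a ∈ SS m) (hb : b ∈ SS m) (hbm : b ∉ m)
    (hd : a / b ∈ m) : a ∈ m := by
  have hb0 : b ≠ 0 := h.not_mem_ne_zero hbm
  have : a = (a / b) * b := by field_simp
  rw [this]
  exact h.absorb hd hb

theorem mul_not_mem {b b' : K} (hb : b ∈ SS m) (hbm : b ∉ m) (hb' : b' ∈ SS m)
    (hbm' : b' ∉ m) : b * b' ∉ m := by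
  intro hmm
  obtain ⟨z, c, hc, rfl⟩ := hb
  obtain ⟨w, d, hd, rfl⟩ := hb'
  have e : ((z:K) + c) * ((w:K) + d)
      = ((z*w : ℤ):K) + ((w:K) * c + (z:K) * d + c * d) := by push_cast; ring
  have hmem : ((z*w : ℤ):K) ∈ m := by
    have hrest : ((w:K) * c + (z:K) * d + c * d) ∈ m :=
      h.add _ (h.add _ (h.intmul w hc) _ (h.intmul z hd)) _ (h.mul _ hc _ hd)
    have := h.sub_mem hmm hrest
    rw [e] at this
    simpa using this
  have := h.intz _ hmem
  push_cast at this
  rcases mul_eq_zero.mp this with h0 | h0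
  · exact hbm (by simpa [h0] using hc)
  · exact hbm' (by simpa [h0] using hd)

theorem SS_subset_RR : SS m ⊆ RR m := fun a ha =>
  ⟨a, ha, 1, h.one_mem_SS, h.one_not_mem, by simp⟩

theorem m_subset_RR : m ⊆ RR m := fun a ha => h.SS_subset_RR (h.m_subset_SS ha)

theorem zero_mem_RR : (0:K) ∈ RR m := h.m_subset_RR h.zero

theorem one_mem_RR : (1:K) ∈ RR m := h.SS_subset_RR h.one_mem_SS

theorem RR_add {x y : K} (hx : x ∈ RR m) (hy : y ∈ RR m) : x + y ∈ RR m := by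
  obtain ⟨a, ha, b, hb, hbm, rfl⟩ := hx
  obtain ⟨a', ha', b', hb', hbm', rfl⟩ := hy
  refine ⟨a * b' + a' * b, h.SS_add (h.SS_mul ha hb') (h.SS_mul ha' hb),
    b * b', h.SS_mul hb hb', h.mul_not_mem hb hbm hb' hbm', ?_⟩
  have hb0 : b ≠ 0 := h.not_mem_ne_zero hbm
  have hb0' : b' ≠ 0 := h.not_mem_ne_zero hbm'
  field_simp

theorem RR_mul {x y : K} (hx : x ∈ RR m) (hy : y ∈ RR m) : x * y ∈ RR m := by
  obtain ⟨a, ha, b, hb, hbm, rfl⟩ := hx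
  obtain ⟨a', ha', b', hb', hbm', rfl⟩ := hy
  exact ⟨a * a', h.SS_mul ha ha', b * b', h.SS_mul hb hb',
    h.mul_not_mem hb hbm hb' hbm', by rw [div_mul_div_comm]⟩

theorem RR_neg {x : K} (hx : x ∈ RR m) : -x ∈ RR m := by
  obtain ⟨a, ha, b, hb, hbm, rfl⟩ := hx
  exact ⟨-a, h.SS_neg ha, b, hb, hbm, by rw [neg_div]⟩

theorem absorbR {c x : K} (hc : c ∈ m) (hx : x ∈ RR m) : c * x ∈ m := by
  obtain ⟨a, ha, b, hb, hbm, rfl⟩ := hx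
  have e : c * (a / b) = (c * a) / b := by rw [mul_div_assoc]
  rw [e]
  exact h.div_mem_of_mem (h.absorb hc ha) hb hbm

theorem unit_of_not_mem {x : K} (hx : x ∈ RR m) (hxm : x ∉ m) :
    ∃ y ∈ RR m, x * y = 1 := by
  obtain ⟨a, ha, b, hb, hbm, rfl⟩ := hx
  have ham : a ∉ m := fun haa => hxm (h.div_mem_of_mem haa hb hbm)
  have ha0 : a ≠ 0 := h.not_mem_ne_zero ham
  have hb0 : b ≠ 0 := h.not_mem_ne_zero hbm
  exact ⟨b / a, ⟨b, hb, a, ha, ham, rfl⟩, by field_simp⟩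

theorem RR_pow {x : K} (hx : x ∈ RR m) (k : ℕ) : x ^ k ∈ RR m := by
  induction k with
  | zero => simpa using h.one_mem_RR
  | succ n ih => rw [pow_succ]; exact h.RR_mul ih hx

theorem nonunit {x : K} (hx : x ∈ m) : ∀ y ∈ RR m, x * y ≠ 1 := fun y hy heq =>
  h.one_not_mem (heq ▸ h.absorbR hx hy)

theorem inv_one_add {a : K} (ha : a ∈ m) : (1 + a) ≠ 0 ∧ (1 + a)⁻¹ - 1 ∈ m := by
  have h1 := (h.inv1 _ ha).1
  refine ⟨h1, ?_⟩
  have e : (1 + a)⁻¹ - 1 = -(a / (1 + a)) := by field_simp; ring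
  rw [e]
  exact h.neg _ (h.inv1 _ ha).2

theorem inv_add_one_mem {x : K} (hx : x + 1 ∈ m) : x⁻¹ + 1 ∈ m := by
  have hna : -(x + 1) ∈ m := h.neg _ hx
  have h1 : (1 : K) + -(x+1) ≠ 0 := (h.inv1 _ hna).1
  have h2 : (1 + -(x+1))⁻¹ - 1 ∈ m := (h.inv_one_add hna).2
  have hx0 : x ≠ 0 := by
    intro h0
    rw [h0] at h1
    simp at h1
  have e : x⁻¹ + 1 = -((1 + -(x+1))⁻¹ - 1) := by
    have hx1 : (1:K) + -(x+1) = -x := by ring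
    rw [hx1, inv_neg]
    field_simp
    ring
  rw [e]
  exact h.neg _ h2

end NiceSet

def Rsub (m : Set K) (h : NiceSet m) : Subring K where
  carrier := RR m
  zero_mem' := h.zero_mem_RR
  one_mem' := h.one_mem_RR
  add_mem' := fun ha hb => h.RR_add ha hb
  mul_mem' := fun ha hb => h.RR_mul ha hb
  neg_mem' := fun ha => h.RR_neg ha

theorem mem_Rsub {m : Set K} (h : NiceSet m) {x : K} : x ∈ Rsub m h ↔ x ∈ RR m := Iff.rfl

theorem eval_mem {Rs : Subring K} {p : K[X]} (hp : ∀ i, p.coeff i ∈ Rs) {x : K}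
    (hx : x ∈ Rs) : p.eval x ∈ Rs := by
  rw [Polynomial.eval_eq_sum_range]
  exact Subring.sum_mem _ fun i _ => Rs.mul_mem (hp i) (Rs.pow_mem hx i)

theorem hensel_main {m : Set K} (h : NiceSet m)
    (hh : ∀ n : ℕ, 1 ≤ n → ∀ a : ℕ → K, (∀ i < n, a i ∈ m) →
      ∃ x, x + 1 ∈ m ∧ x ^ (n + 1) + x ^ n + ∑ i ∈ Finset.range n, a i * x ^ i = 0)
    (f : K[X]) (hf : ∀ i, f.coeff i ∈ RR m) {α : K} (hα : α ∈ RR m)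
    (h0 : f.eval α ∈ m) (h1 : f.derivative.eval α ∉ m) :
    ∃ b ∈ RR m, f.eval b = 0 ∧ b - α ∈ m := by
  by_cases hz : f.eval α = 0
  · exact ⟨α, hα, hz, by simpa using h.zero⟩
  set g : K[X] := Polynomial.taylor α f with hg
  set c : ℕ → K := fun i => g.coeff i with hc
  have hcR : ∀ i, c i ∈ RR m := by
    intro i
    show g.coeff i ∈ RR m
    rw [hg, Polynomial.taylor_coeff]
    refine eval_mem (Rs := Rsub m h) (fun j => ?_) hα
    rw [Polynomial.hasseDeriv_coeff]
    exact Subring.mul_mem _ (natCast_mem (Rsub m h) _) (hf _)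
  have hc0 : c 0 = f.eval α := by
    show g.coeff 0 = f.eval α
    rw [hg]; exact Polynomial.taylor_coeff_zero α f
  have hc1 : c 1 = f.derivative.eval α := by
    show g.coeff 1 = f.derivative.eval α
    rw [hg]; exact Polynomial.taylor_coeff_one α f
  have hc1m : c 1 ∉ m := by rw [hc1]; exact h1
  have hc1ne : c 1 ≠ 0 := fun e => hc1m (e ▸ h.zero)
  have hc0m : c 0 ∈ m := by rw [hc0]; exact h0
  have hc0ne : c 0 ≠ 0 := by rw [hc0]; exact hz
  set d : ℕ := g.natDegree with hd
  have hd1 : 1 ≤ d := by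
    rcases Nat.eq_zero_or_pos d with h0' | h0'
    · exfalso
      apply hc1ne
      exact Polynomial.coeff_eq_zero_of_natDegree_lt (by omega : g.natDegree < 1)
    · exact h0'
  set t : K := c 0 / c 1 with ht
  have hc1inv : (c 1)⁻¹ ∈ RR m := by
    obtain ⟨y, hy, hxy⟩ := h.unit_of_not_mem (hcR 1) hc1m
    have hyy : y = (c 1)⁻¹ := eq_inv_of_mul_eq_one_left (by linear_combination hxy)
    rwa [hyy] at hy
  have htm : t ∈ m := by
    rw [ht, div_eq_mul_inv]
    exact h.absorbR hc0m hc1inv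
  have htR : t ∈ RR m := h.m_subset_RR htm
  set A : ℕ → K := fun i => c (d - i) * t ^ (d - i - 1) * (c 1)⁻¹ with hA
  have hAm : ∀ i < d - 1, A i ∈ m := by
    intro i hi
    have e : A i = t * (t ^ (d - i - 2) * c (d - i) * (c 1)⁻¹) := by
      show c (d - i) * t ^ (d - i - 1) * (c 1)⁻¹ = _
      have e2 : d - i - 1 = (d - i - 2) + 1 := by omega
      rw [e2, pow_succ]; ring
    rw [e]
    exact h.absorbR htm (h.RR_mul (h.RR_mul (h.RR_pow htR _) (hcR _)) hc1inv)
  have hroot : ∃ x, x + 1 ∈ m ∧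
      x ^ ((d-1) + 1) + x ^ (d-1) + ∑ i ∈ Finset.range (d-1), A i * x ^ i = 0 := by
    rcases Nat.lt_or_ge d 2 with hd2 | hd2
    · have hd1' : d - 1 = 0 := by omega
      refine ⟨-1, by simpa using h.zero, ?_⟩
      rw [hd1']
      norm_num
    · exact hh (d-1) (by omega) A hAm
  obtain ⟨x, hx1, hxeq⟩ := hroot
  have hxne : x ≠ 0 := by
    intro h0'
    rw [h0'] at hx1
    exact h.one_not_mem (by simpa using hx1)
  set G : ℕ → K := fun j => c j * t ^ j * x ^ (d - j) with hG
  have expand : g.eval (t * x⁻¹) * x ^ d = ∑ j ∈ Finset.range (d+1), G j := by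
    rw [Polynomial.eval_eq_sum_range, Finset.sum_mul]
    refine Finset.sum_congr rfl fun j hj => ?_
    have hjd : j ≤ d := by
      have := Finset.mem_range.mp hj
      omega
    have exd : x ^ d = x ^ (d - j) * x ^ j := by
      rw [← pow_add]
      congr 1
      omega
    show g.coeff j * (t * x⁻¹) ^ j * x ^ d = c j * t ^ j * x ^ (d - j)
    rw [exd, mul_pow, inv_pow]
    have hxj : (x:K) ^ j ≠ 0 := pow_ne_zero j hxne
    field_simp
    ring
  have split1 : ∑ j ∈ Finset.range (d+1), G j = (∑ i ∈ Finset.range d, G (i+1)) + G 0 :=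
    Finset.sum_range_succ' G d
  have hdd : d = (d-1)+1 := by omega
  have split2 : ∑ i ∈ Finset.range d, G (i+1)
      = (∑ i ∈ Finset.range (d-1), G (i+2)) + G 1 := by
    rw [hdd]
    simpa using Finset.sum_range_succ' (fun i => G (i+1)) (d-1)
  have reflect : ∑ i ∈ Finset.range (d-1), G (i+2) = ∑ i ∈ Finset.range (d-1), G (d - i) := by
    have hr := Finset.sum_range_reflect (fun i => G (i+2)) (d-1)
    rw [← hr]
    refine Finset.sum_congr rfl fun j hj => ?_
    congr 1
    have := Finset.mem_range.mp hj
    omega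
  have eq0 : G 0 = c 0 * x ^ ((d-1)+1) := by
    show c 0 * t ^ 0 * x ^ (d - 0) = c 0 * x ^ ((d-1)+1)
    rw [← hdd]
    simp
  have hc1t : c 1 * t = c 0 := by
    rw [ht]
    field_simp
  have eq1 : G 1 = c 0 * x ^ (d-1) := by
    show c 1 * t ^ 1 * x ^ (d - 1) = c 0 * x ^ (d-1)
    rw [pow_one, hc1t]
  have e3 : c 0 * (c 1)⁻¹ = t := by rw [ht, div_eq_mul_inv]
  have eqi : ∀ i ∈ Finset.range (d-1), c 0 * (A i * x ^ i) = G (d - i) := by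
    intro i hi
    have hid := Finset.mem_range.mp hi
    have e1 : d - (d - i) = i := by omega
    have e2 : (d - i - 1) + 1 = d - i := by omega
    show c 0 * (c (d - i) * t ^ (d - i - 1) * (c 1)⁻¹ * x ^ i)
        = c (d - i) * t ^ (d - i) * x ^ (d - (d - i))
    calc c 0 * (c (d - i) * t ^ (d - i - 1) * (c 1)⁻¹ * x ^ i)
        = c (d - i) * (t ^ (d - i - 1) * t) * x ^ i := by rw [← e3]; ring
      _ = c (d - i) * t ^ ((d - i - 1) + 1) * x ^ i := by rw [pow_succ]
      _ = c (d - i) * t ^ (d - i) * x ^ (d - (d - i)) := by rw [e2, e1]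
  have hkey : g.eval (t * x⁻¹) * x ^ d
      = c 0 * (x ^ ((d-1)+1) + x ^ (d-1) + ∑ i ∈ Finset.range (d-1), A i * x ^ i) := by
    rw [expand, split1, split2, reflect, mul_add, mul_add, Finset.mul_sum,
      Finset.sum_congr rfl eqi, ← eq0, ← eq1]
    ring
  have gz : g.eval (t * x⁻¹) = 0 := by
    have h2 := hkey
    rw [hxeq, mul_zero] at h2
    exact (mul_eq_zero.mp h2).resolve_right (pow_ne_zero d hxne)
  have htx : t * x⁻¹ ∈ m := by
    have hxi : x⁻¹ + 1 ∈ m := h.inv_add_one_mem hx1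
    have hxR : x⁻¹ ∈ RR m := h.SS_subset_RR ⟨-1, x⁻¹ + 1, hxi, by push_cast; ring⟩
    exact h.absorbR htm hxR
  refine ⟨t * x⁻¹ + α, Subring.add_mem (Rsub m h) (h.m_subset_RR htx) hα, ?_,
    by rwa [add_sub_cancel_right]⟩
  have := Polynomial.taylor_eval α f (t * x⁻¹)
  rw [← hg] at this
  rw [← this]
  exact gz

section Topo

variable [TopologicalSpace K] [IsTopologicalRing K] [ContinuousInv₀ K] [T2Space K]

/-- The auxiliary gt-henselian hypothesis, stated locally. -/
def GtH (K : Type*) [Field K] [TopologicalSpace K] : Prop :=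
  ∀ n : ℕ, 1 ≤ n → ∀ P ∈ nhds (-1 : K), ∃ O ∈ nhds (0 : K),
    ∀ a : ℕ → K, (∀ i < n, a i ∈ O) →
      ∃ x ∈ P, x ^ (n + 1) + x ^ n + ∑ i ∈ Finset.range n, a i * x ^ i = 0

theorem nhds_neg_one_shift {V : Set K} (hV : V ∈ nhds (0:K)) :
    {x : K | x + 1 ∈ V} ∈ nhds (-1 : K) := by
  have hc : ContinuousAt (fun x : K => x + 1) (-1) := by fun_prop
  exact hc.preimage_mem_nhds (t := V) (by simpa using hV)

theorem exists_mul_subset {V : Set K} (hV : V ∈ nhds (0:K)) :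
    ∃ W ∈ nhds (0:K), ∀ a ∈ W, ∀ b ∈ W, a * b ∈ V := by
  have hc : ContinuousAt (fun p : K × K => p.1 * p.2) (0, 0) := by fun_prop
  have hpre := hc.preimage_mem_nhds (t := V) (by simpa using hV)
  rw [nhds_prod_eq] at hpre
  rcases Filter.mem_prod_iff.mp hpre with ⟨W1, hW1, W2, hW2, hsub⟩
  exact ⟨W1 ∩ W2, Filter.inter_mem hW1 hW2,
    fun a ha b hb => hsub (Set.mk_mem_prod ha.1 hb.2)⟩

theorem exists_add_subset {V : Set K} (hV : V ∈ nhds (0:K)) :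
    ∃ W ∈ nhds (0:K), ∀ a ∈ W, ∀ b ∈ W, a + b ∈ V := by
  have hc : ContinuousAt (fun p : K × K => p.1 + p.2) (0, 0) := by fun_prop
  have hpre := hc.preimage_mem_nhds (t := V) (by simpa using hV)
  rw [nhds_prod_eq] at hpre
  rcases Filter.mem_prod_iff.mp hpre with ⟨W1, hW1, W2, hW2, hsub⟩
  exact ⟨W1 ∩ W2, Filter.inter_mem hW1 hW2,
    fun a ha b hb => hsub (Set.mk_mem_prod ha.1 hb.2)⟩

theorem neg_preimage_nhds {V : Set K} (hV : V ∈ nhds (0:K)) :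
    {a : K | -a ∈ V} ∈ nhds (0:K) := by
  have hc : ContinuousAt (fun a : K => -a) 0 := by fun_prop
  exact hc.preimage_mem_nhds (t := V) (by simpa using hV)

theorem inv_shift_nhds {V : Set K} (hV : V ∈ nhds (0:K)) :
    {a : K | 1 + a ≠ 0 ∧ a / (1 + a) ∈ V} ∈ nhds (0:K) := by
  have h1 : {a : K | 1 + a ≠ 0} ∈ nhds (0:K) := by
    have hc : ContinuousAt (fun a : K => 1 + a) 0 := by fun_prop
    exact hc.preimage_mem_nhds
      (compl_singleton_mem_nhds (show (fun a : K => 1 + a) 0 ≠ 0 by norm_num))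
  have h2 : (fun a : K => a / (1 + a)) ⁻¹' V ∈ nhds (0:K) := by
    have hc : ContinuousAt (fun a : K => a / (1 + a)) 0 := by
      apply ContinuousAt.div
      · fun_prop
      · fun_prop
      · norm_num
    apply hc.preimage_mem_nhds
    simpa using hV
  filter_upwards [h1, h2] with a ha1 ha2
  exact ⟨ha1, ha2⟩

theorem div_int_nhds {V : Set K} (hV : V ∈ nhds (0:K)) (z : ℤ) :
    {a : K | (z:K) ≠ 0 → a / (z:K) ∈ V} ∈ nhds (0:K) := by
  by_cases hz : (z:K) = 0
  · have : {a : K | (z:K) ≠ 0 → a / (z:K) ∈ V} = Set.univ := by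
      ext a; simp [hz]
    rw [this]
    exact Filter.univ_mem
  · have hc : ContinuousAt (fun a : K => a / (z:K)) 0 := by fun_prop
    have hpre := hc.preimage_mem_nhds (t := V) (by simpa using hV)
    filter_upwards [hpre] with a ha _
    exact ha

theorem shrink (hω : ∀ f : ℕ → Set K, (∀ n, f n ∈ nhds (0 : K)) → (⋂ n, f n) ∈ nhds (0 : K))
    (hgt : GtH K) {V : Set K} (hV : V ∈ nhds (0:K)) :
    ∃ W ∈ nhds (0:K), W ⊆ V ∧
      (∀ a ∈ W, ∀ b ∈ W, a + b ∈ V) ∧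
      (∀ a ∈ W, ∀ b ∈ W, a * b ∈ V) ∧
      (∀ a ∈ W, -a ∈ V) ∧
      (∀ a ∈ W, 1 + a ≠ 0 ∧ a / (1 + a) ∈ V) ∧
      (∀ a ∈ W, ∀ z : ℤ, (z:K) ≠ 0 → a / (z:K) ∈ V) ∧
      (∀ n : ℕ, 1 ≤ n → ∀ a : ℕ → K, (∀ i < n, a i ∈ W) →
        ∃ x, x + 1 ∈ V ∧ x ^ (n+1) + x ^ n + ∑ i ∈ Finset.range n, a i * x ^ i = 0) := by
  obtain ⟨W1, hW1, hadd⟩ := exists_add_subset hV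
  obtain ⟨W2, hW2, hmul⟩ := exists_mul_subset hV
  have hW3 := neg_preimage_nhds hV
  have hW4 := inv_shift_nhds hV
  have hWdiv : (⋂ n : ℕ, {a : K | ((Denumerable.ofNat ℤ n : ℤ):K) ≠ 0 →
      a / ((Denumerable.ofNat ℤ n : ℤ):K) ∈ V}) ∈ nhds (0:K) :=
    hω _ (fun n => div_int_nhds hV _)
  have hgtO : ∀ n : ℕ, ∃ O, O ∈ nhds (0:K) ∧ (1 ≤ n → ∀ a : ℕ → K, (∀ i < n, a i ∈ O) →
      ∃ x, x + 1 ∈ V ∧ x ^ (n+1) + x ^ n + ∑ i ∈ Finset.range n, a i * x ^ i = 0) := by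
    intro n
    by_cases hn : 1 ≤ n
    · obtain ⟨O, hO, hOp⟩ := hgt n hn {x | x + 1 ∈ V} (nhds_neg_one_shift hV)
      refine ⟨O, hO, fun _ a ha => ?_⟩
      obtain ⟨x, hx, he⟩ := hOp a ha
      exact ⟨x, hx, he⟩
    · exact ⟨Set.univ, Filter.univ_mem, fun hle => absurd hle hn⟩
  choose O hO hOp using hgtO
  have hWO : (⋂ n, O n) ∈ nhds (0:K) := hω _ hO
  refine ⟨V ∩ W1 ∩ W2 ∩ {a : K | -a ∈ V} ∩ {a : K | 1 + a ≠ 0 ∧ a / (1 + a) ∈ V}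
      ∩ (⋂ n : ℕ, {a : K | ((Denumerable.ofNat ℤ n : ℤ):K) ≠ 0 →
        a / ((Denumerable.ofNat ℤ n : ℤ):K) ∈ V}) ∩ (⋂ n, O n),
    by
      refine Filter.inter_mem (Filter.inter_mem (Filter.inter_mem (Filter.inter_mem
        (Filter.inter_mem (Filter.inter_mem hV hW1) hW2) hW3) hW4) hWdiv) hWO,
    fun a ha => ha.1.1.1.1.1.1,
    fun a ha b hb => hadd a ha.1.1.1.1.1.2 b hb.1.1.1.1.1.2,
    fun a ha b hb => hmul a ha.1.1.1.1.2 b hb.1.1.1.1.2,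
    fun a ha => ha.1.1.1.2,
    fun a ha => ha.1.1.2,
    fun a ha z hz => ?_,
    fun n hn a ha => hOp n hn a (fun i hi => Set.mem_iInter.mp (ha i hi).2 n)⟩
  have := Set.mem_iInter.mp ha.1.2 (Encodable.encode z)
  rw [Denumerable.ofNat_encode] at this
  exact this hz

theorem tower (hω : ∀ f : ℕ → Set K, (∀ n, f n ∈ nhds (0 : K)) → (⋂ n, f n) ∈ nhds (0 : K))
    (hgt : GtH K) {V0 : Set K} (hV0 : V0 ∈ nhds (0:K)) :
    ∃ M : ℕ → Set K, ∃ m : Set K, m = (⋂ k, M k) ∧ M 0 = V0 ∧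
      (∀ k, M k ∈ nhds (0:K)) ∧ (∀ k, M (k+1) ⊆ M k) ∧ m ∈ nhds (0:K) ∧
      (∀ a ∈ m, ∀ b ∈ m, a + b ∈ m) ∧ (∀ a ∈ m, ∀ b ∈ m, a * b ∈ m) ∧
      (∀ a ∈ m, -a ∈ m) ∧
      (∀ a ∈ m, 1 + a ≠ 0 ∧ a / (1+a) ∈ m) ∧
      (∀ a ∈ m, ∀ z : ℤ, (z:K) ≠ 0 → a / (z:K) ∈ m) ∧
      (∀ n : ℕ, 1 ≤ n → ∀ a : ℕ → K, (∀ i < n, a i ∈ m) → ∀ k, ∃ x, x + 1 ∈ M k ∧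
        x ^ (n+1) + x ^ n + ∑ i ∈ Finset.range n, a i * x ^ i = 0) := by
  have hstep := fun V : {V : Set K // V ∈ nhds (0:K)} => shrink hω hgt V.2
  choose Fs hFn hFsub hFadd hFmul hFneg hFinv hFdiv hFgt using hstep
  set step : {V : Set K // V ∈ nhds (0:K)} → {V : Set K // V ∈ nhds (0:K)} :=
    fun V => ⟨Fs V, hFn V⟩ with hstepdef
  set Msub : ℕ → {V : Set K // V ∈ nhds (0:K)} := fun k => step^[k] ⟨V0, hV0⟩ with hMsub
  set M : ℕ → Set K := fun k => (Msub k).1 with hM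
  have hMsucc : ∀ k, Msub (k+1) = step (Msub k) := fun k =>
    Function.iterate_succ_apply' step k _
  have hMsucc' : ∀ k, M (k+1) = Fs (Msub k) := fun k =>
    congrArg Subtype.val (hMsucc k)
  set m : Set K := ⋂ k, M k with hm
  have hmem : ∀ a, a ∈ m → ∀ k, a ∈ M k := fun a ha k => Set.mem_iInter.mp ha k
  have hmk : ∀ a, (∀ k, a ∈ M k) → a ∈ m := fun a ha => Set.mem_iInter.mpr ha
  have hMnhds : ∀ k, M k ∈ nhds (0:K) := fun k => (Msub k).2
  refine ⟨M, m, rfl, rfl, hMnhds, ?_, hω _ hMnhds, ?_, ?_, ?_, ?_, ?_, ?_⟩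
  · intro k
    rw [hMsucc' k]
    exact hFsub (Msub k)
  · intro a ha b hb
    refine hmk _ fun k => ?_
    have := hFadd (Msub k) a (by rw [← hMsucc' k]; exact hmem a ha (k+1))
      b (by rw [← hMsucc' k]; exact hmem b hb (k+1))
    exact this
  · intro a ha b hb
    refine hmk _ fun k => ?_
    exact hFmul (Msub k) a (by rw [← hMsucc' k]; exact hmem a ha (k+1))
      b (by rw [← hMsucc' k]; exact hmem b hb (k+1))
  · intro a ha
    refine hmk _ fun k => ?_
    exact hFneg (Msub k) a (by rw [← hMsucc' k]; exact hmem a ha (k+1))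
  · intro a ha
    have h1 := hFinv (Msub 0) a (by rw [← hMsucc' 0]; exact hmem a ha 1)
    refine ⟨h1.1, hmk _ fun k => ?_⟩
    exact (hFinv (Msub k) a (by rw [← hMsucc' k]; exact hmem a ha (k+1))).2
  · intro a ha z hz
    refine hmk _ fun k => ?_
    exact hFdiv (Msub k) a (by rw [← hMsucc' k]; exact hmem a ha (k+1)) z hz
  · intro n hn a ha k
    exact hFgt (Msub k) n hn a fun i hi => by
      rw [← hMsucc' k]; exact hmem (a i) (ha i hi) (k+1)

theorem exists_nice (hω : ∀ f : ℕ → Set K, (∀ n, f n ∈ nhds (0 : K)) → (⋂ n, f n) ∈ nhds (0 : K))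
    (hgt : GtH K) {U : Set K} (hU : U ∈ nhds (0:K)) :
    ∃ m : Set K, m ∈ nhds (0:K) ∧ m ⊆ U ∧ NiceSet m ∧
      (∀ n : ℕ, 1 ≤ n → ∀ a : ℕ → K, (∀ i < n, a i ∈ m) →
        ∃ x, x + 1 ∈ m ∧ x ^ (n+1) + x ^ n + ∑ i ∈ Finset.range n, a i * x ^ i = 0) := by
  haveI : DecidableEq K := Classical.decEq K
  -- Step 0: a neighbourhood avoiding all nonzero integers
  set Az : ℕ → Set K := fun n =>
    if ((Denumerable.ofNat ℤ n : ℤ):K) = 0 then Set.univ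
    else {((Denumerable.ofNat ℤ n : ℤ):K)}ᶜ with hAz
  have hAznhds : ∀ n, Az n ∈ nhds (0:K) := by
    intro n
    rw [hAz]
    dsimp only
    split
    · exact Filter.univ_mem
    · exact compl_singleton_mem_nhds (fun hh => by simp_all)
  set U0 : Set K := U ∩ ⋂ n, Az n with hU0
  have hU0nhds : U0 ∈ nhds (0:K) := Filter.inter_mem hU (hω _ hAznhds)
  have hU0int : ∀ x ∈ U0, ∀ z : ℤ, x = (z:K) → (z:K) = 0 := by
    intro x hx z hxz
    by_contra hz
    have hmem := Set.mem_iInter.mp hx.2 (Encodable.encode z)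
    rw [hAz] at hmem
    simp only [Denumerable.ofNat_encode] at hmem
    rw [if_neg hz] at hmem
    exact hmem (by rw [hxz]; exact Set.mem_singleton _)
  -- Stage 1: an ambient nice set μ
  obtain ⟨Mμ, μ, hμeq, hMμ0, hMμnhds, hMμdec, hμnhds, hμadd, hμmul, hμneg, hμinv, hμdiv, hμgt⟩ :=
    tower hω hgt hU0nhds
  have hμsub : μ ⊆ U0 := by
    rw [hμeq, ← hMμ0]
    exact Set.iInter_subset Mμ 0
  have hμzero : (0:K) ∈ μ := mem_of_mem_nhds hμnhds
  have hμnice : NiceSet μ :=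
    ⟨hμzero, hμadd, hμmul, hμneg, hμinv,
      fun z hz => hU0int _ (hμsub hz) z rfl, hμdiv⟩
  -- Stage 2: the final set m
  obtain ⟨Mm, m, hmeq, hMm0, hMmnhds, hMmdec, hmnhds, hmadd, hmmul, hmneg, hminv, hmdiv, hmgt⟩ :=
    tower hω hgt hμnhds
  have hmsubμ : m ⊆ μ := by
    rw [hmeq, ← hMm0]
    exact Set.iInter_subset Mm 0
  have hMsubμ : ∀ k, Mm k ⊆ μ := by
    intro k
    induction k with
    | zero => rw [hMm0]
    | succ n ih => exact (hMmdec n).trans ih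
  have hmzero : (0:K) ∈ m := mem_of_mem_nhds hmnhds
  have hmnice : NiceSet m :=
    ⟨hmzero, hmadd, hmmul, hmneg, hminv,
      fun z hz => hU0int _ (hμsub (hmsubμ hz)) z rfl, hmdiv⟩
  refine ⟨m, hmnhds, fun x hx => (hμsub (hmsubμ hx)).1, hmnice, ?_⟩
  intro n hn a ha
  have hroots := hmgt n hn a ha
  obtain ⟨x0, hx00, hx0eq⟩ := hroots 0
  refine ⟨x0, ?_, hx0eq⟩
  rw [hmeq]
  refine Set.mem_iInter.mpr fun k => ?_
  obtain ⟨xk, hxk, hxkeq⟩ := hroots k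
  have hha : ∀ i < n, a i ∈ μ := fun i hi => hmsubμ (ha i hi)
  have : x0 = xk :=
    root_uniq hμnice n hn a hha (hMsubμ 0 hx00) (hMsubμ k hxk) hx0eq hxkeq
  rw [this]
  exact hxk

theorem frac_lemma (hnd : ¬ DiscreteTopology K) {m : Set K} (hm : m ∈ nhds (0:K))
    (h : NiceSet m) : ∀ x : K, ∃ a ∈ RR m, ∃ b ∈ RR m, b ≠ 0 ∧ x = a / b := by
  intro x
  by_cases hx : x = 0
  · exact ⟨0, h.zero_mem_RR, 1, h.one_mem_RR, one_ne_zero, by rw [hx]; simp⟩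
  · have hc : ContinuousAt (fun y : K => x * y) 0 := by fun_prop
    have hW : m ∩ (fun y : K => x * y) ⁻¹' m ∈ nhds (0:K) :=
      Filter.inter_mem hm (hc.preimage_mem_nhds (t := m) (by simpa using hm))
    have hne : ∃ y ∈ m ∩ (fun y : K => x * y) ⁻¹' m, y ≠ 0 := by
      by_contra hcon
      push_neg at hcon
      have hsub : m ∩ (fun y : K => x * y) ⁻¹' m ⊆ {0} := fun y hy => hcon y hy
      have hsing : ({0} : Set K) ∈ nhds (0:K) := Filter.mem_of_superset hW hsub
      have hopen : IsOpen ({0} : Set K) := by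
        rcases mem_nhds_iff.mp hsing with ⟨O, hO1, hO2, hO3⟩
        have hOeq : O = {0} := le_antisymm hO1 (Set.singleton_subset_iff.mpr hO3)
        rwa [← hOeq]
      apply hnd
      rw [discreteTopology_iff_isOpen_singleton]
      intro a
      have heq : ({a} : Set K) = (fun y : K => y - a) ⁻¹' {0} := by
        ext y; simp [sub_eq_zero]
      rw [heq]
      exact (by fun_prop : Continuous (fun y : K => y - a)).isOpen_preimage _ hopen
    obtain ⟨y, ⟨hy1, hy2⟩, hy0⟩ := hne
    refine ⟨x * y, h.m_subset_RR hy2, y, h.m_subset_RR hy1, hy0, ?_⟩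
    rw [mul_div_assoc, div_self hy0, mul_one]

end Topo

end Statement15Aux

open Statement15Aux

/-- An ω-complete field topology is gt-henselian if and only if it admits a
neighbourhood basis at `0` consisting of henselian ideals. -/
theorem statement15 {K : Type*} [Field K] [TopologicalSpace K]
    [IsTopologicalRing K] [ContinuousInv₀ K] [T2Space K]
    (hnd : ¬ DiscreteTopology K)
    (hω : ∀ f : ℕ → Set K, (∀ n, f n ∈ nhds (0 : K)) → (⋂ n, f n) ∈ nhds (0 : K)) :
    GtHenselian K ↔
      ∀ U ∈ nhds (0 : K), ∃ P, P ∈ nhds (0 : K) ∧ P ⊆ U ∧ IsHenselianIdeal P := by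
  constructor
  · intro hgt U hU
    have hgt' : GtH K := hgt
    obtain ⟨m, hm𝓝, hmU, hnice, hhen⟩ := exists_nice hω hgt' hU
    refine ⟨m, hm𝓝, hmU, Rsub m hnice, ?_, ?_, ?_, ?_⟩
    · exact frac_lemma hnd hm𝓝 hnice
    · ext x
      constructor
      · intro hx
        exact ⟨hnice.m_subset_RR hx, fun y hy => hnice.nonunit hx y hy⟩
      · rintro ⟨hxR, hxnu⟩
        by_contra hxm
        obtain ⟨y, hy, hxy⟩ := hnice.unit_of_not_mem hxR hxm
        exact hxnu y hy hxy
    · exact fun x hx y hy => hnice.add x hx y hy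
    · exact fun f hf a ha hfa hfd => hensel_main hnice hhen f hf ha hfa hfd
  · intro hbasis n hn P hP
    have hQ : {y : K | -1 + y ∈ P} ∈ nhds (0:K) := by
      have hc : ContinuousAt (fun y : K => -1 + y) 0 := by fun_prop
      exact hc.preimage_mem_nhds (t := P) (by simpa using hP)
    obtain ⟨I, hI𝓝, hIQ, R, hfrac, hIeq, hIadd, hIhen⟩ := hbasis _ hQ
    have hIR : ∀ x ∈ I, x ∈ R := fun x hx => (by rw [hIeq] at hx; exact hx.1)
    have hInu : ∀ x ∈ I, ∀ y ∈ R, x * y ≠ 1 := fun x hx =>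
      (by rw [hIeq] at hx; exact hx.2)
    have h0I : (0:K) ∈ I := by
      rw [hIeq]
      exact ⟨R.zero_mem, fun y hy h1 => by simp at h1⟩
    have hmulRI : ∀ x ∈ I, ∀ r ∈ R, x * r ∈ I := by
      intro x hx r hr
      rw [hIeq]
      refine ⟨R.mul_mem (hIR x hx) hr, fun y hy hxy => ?_⟩
      exact hInu x hx (r * y) (R.mul_mem hr hy) (by rw [← hxy]; ring)
    have hnegI : ∀ x ∈ I, -x ∈ I := by
      intro x hx
      have : -x = x * (-1) := by ring
      rw [this]
      exact hmulRI x hx (-1) (R.neg_mem R.one_mem)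
    have hsumI : ∀ (s : Finset ℕ) (f : ℕ → K), (∀ i ∈ s, f i ∈ I) → (∑ i ∈ s, f i) ∈ I :=
      fun s f hf => Finset.sum_induction f (· ∈ I) (fun a b ha hb => hIadd a ha b hb) h0I hf
    refine ⟨I, hI𝓝, ?_⟩
    intro a ha
    set f : K[X] := X^(n+1) + X^n + ∑ i ∈ Finset.range n, Polynomial.C (a i) * X^i with hf
    have hcoeff : ∀ j, f.coeff j ∈ R := by
      intro j
      rw [hf]
      simp only [Polynomial.coeff_add, Polynomial.coeff_X_pow, Polynomial.finset_sum_coeff,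
        Polynomial.coeff_C_mul]
      refine R.add_mem (R.add_mem ?_ ?_) (Subring.sum_mem _ fun i hi => ?_)
      · split <;> [exact R.one_mem; exact R.zero_mem]
      · split <;> [exact R.one_mem; exact R.zero_mem]
      · split
        · rw [mul_one]
          exact hIR _ (ha i (Finset.mem_range.mp hi))
        · rw [mul_zero]
          exact R.zero_mem
    have heval : ∀ b : K, f.eval b = b^(n+1) + b^n + ∑ i ∈ Finset.range n, a i * b^i := by
      intro b
      rw [hf]
      simp [Polynomial.eval_finset_sum]
    have hI0 : f.eval (-1) ∈ I := by
      have he : f.eval (-1) = ∑ i ∈ Finset.range n, a i * (-1:K)^i := by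
        rw [heval]
        have : (-1:K)^(n+1) = -(-1:K)^n := by rw [pow_succ]; ring
        rw [this]
        ring
      rw [he]
      exact hsumI _ _ fun i hi => hmulRI _ (ha i (Finset.mem_range.mp hi)) _
        (R.pow_mem (R.neg_mem R.one_mem) i)
    have hder : f.derivative.eval (-1)
        = ((n+1 : ℕ):K) * (-1:K)^(n+1-1) + ((n : ℕ):K) * (-1:K)^(n-1)
          + ∑ i ∈ Finset.range n, a i * (((i : ℕ):K) * (-1:K)^(i-1)) := by
      rw [hf]
      simp only [Polynomial.derivative_add, Polynomial.derivative_sum,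
        Polynomial.derivative_C_mul, Polynomial.derivative_X_pow,
        Polynomial.eval_add, Polynomial.eval_mul, Polynomial.eval_C,
        Polynomial.eval_pow, Polynomial.eval_X, Polynomial.eval_finset_sum]
    have hIder : f.derivative.eval (-1) ∉ I := by
      rw [hder]
      intro hmem
      have hsum : (∑ i ∈ Finset.range n, a i * (((i : ℕ):K) * (-1:K)^(i-1))) ∈ I :=
        hsumI _ _ fun i hi => hmulRI _ (ha i (Finset.mem_range.mp hi)) _
          (R.mul_mem (natCast_mem R i) (R.pow_mem (R.neg_mem R.one_mem) _))
      have hlead : ((n+1 : ℕ):K) * (-1:K)^(n+1-1) + ((n : ℕ):K) * (-1:K)^(n-1) ∈ I := by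
        have h2 := hIadd _ hmem _ (hnegI _ hsum)
        have e : ((n+1 : ℕ):K) * (-1:K)^(n+1-1) + ((n : ℕ):K) * (-1:K)^(n-1)
            = (((n+1 : ℕ):K) * (-1:K)^(n+1-1) + ((n : ℕ):K) * (-1:K)^(n-1)
              + ∑ i ∈ Finset.range n, a i * (((i : ℕ):K) * (-1:K)^(i-1)))
              + (-(∑ i ∈ Finset.range n, a i * (((i : ℕ):K) * (-1:K)^(i-1)))) := by ring
        rw [e]
        exact h2
      obtain ⟨n', rfl⟩ : ∃ n', n = n' + 1 := ⟨n - 1, by omega⟩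
      have he : ((n'+1+1 : ℕ):K) * (-1:K)^(n'+1+1-1) + ((n'+1 : ℕ):K) * (-1:K)^(n'+1-1)
          = (-1:K)^(n'+1) := by
        have e1 : n'+1+1-1 = n'+1 := by omega
        have e2 : n'+1-1 = n' := by omega
        rw [e1, e2]
        push_cast
        rw [pow_succ]
        ring
      rw [he] at hlead
      refine hInu _ hlead _ (R.pow_mem (R.neg_mem R.one_mem) (n'+1)) ?_
      rcases Nat.even_or_odd (n'+1) with hp | hp
      · rw [hp.neg_one_pow]; norm_num
      · rw [hp.neg_one_pow]; norm_num
    obtain ⟨b, hbR, hbeval, hbI⟩ := hIhen f hcoeff (-1) (R.neg_mem R.one_mem) hI0 hIder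
    refine ⟨b, ?_, ?_⟩
    · have hb1 : b + 1 ∈ I := by
        have : b - (-1) = b + 1 := by ring
        rwa [this] at hbI
      have := hIQ hb1
      simpa using this
    · rw [← heval b]
      exact hbeval
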